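/- Let A be a symmetric positive definite real n×n matrix. For the GMRES(1) (minimal residual) iteration r_{k+1} = r_k − α_k A r_k with α_k = ⟨r_k, A r_k⟩/⟨A r_k, A r_k⟩ (and r_{k+1} = 0 if r_k = 0), the residuals satisfy ‖r_k‖ ≤ σ^k ‖r_0‖ where σ = (λ_max(A) − λ_min(A))/(λ_max(A) + λ_min(A)) < 1; in particular the iteration converges for every initial residual. -/

import Mathlib

open Matrix Filter

private lemma dot_self_pos {n : ℕ} {v : Fin n → ℝ} (hv : v ≠ 0) : 0 < v ⬝ᵥ v := by
  rcases Function.ne_iff.1 hv with ⟨i, hi⟩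
  have h : (0:ℝ) < v i * v i := mul_self_pos.2 (by simpa using hi)
  calc (0:ℝ) < v i * v i := h
    _ ≤ v ⬝ᵥ v := Finset.single_le_sum (f := fun j => v j * v j)
        (fun j _ => mul_self_nonneg (v j)) (Finset.mem_univ i)

private lemma dot_eq_inner {n : ℕ} (v w : Fin n → ℝ) :
    v ⬝ᵥ w = inner (𝕜 := ℝ) ((WithLp.equiv 2 (Fin n → ℝ)).symm v)
      ((WithLp.equiv 2 (Fin n → ℝ)).symm w) := by
  simp [PiLp.inner_apply, dotProduct, mul_comm]

private lemma inner_expand {n : ℕ} (b : OrthonormalBasis (Fin n) ℝ (EuclideanSpace ℝ (Fin n)))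
    (x y : EuclideanSpace ℝ (Fin n)) :
    inner (𝕜 := ℝ) x y = ∑ i, b.repr x i * b.repr y i := by
  rw [← b.repr.inner_map_map x y]
  simp only [PiLp.inner_apply, RCLike.inner_apply, starRingEnd_apply, star_trivial]
  exact Finset.sum_congr rfl fun i _ => mul_comm _ _

private lemma spectral_sums {n : ℕ} (A : Matrix (Fin n) (Fin n) ℝ) (hA : A.IsSymm)
    (hH : A.IsHermitian) (v : Fin n → ℝ) :
    ∃ c : Fin n → ℝ,
      v ⬝ᵥ v = ∑ i, c i * c i ∧
      v ⬝ᵥ A.mulVec v = ∑ i, hH.eigenvalues i * (c i * c i) ∧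
      A.mulVec v ⬝ᵥ A.mulVec v = ∑ i, hH.eigenvalues i * hH.eigenvalues i * (c i * c i) := by
  set b := hH.eigenvectorBasis with hb
  set w : EuclideanSpace ℝ (Fin n) := (WithLp.equiv 2 (Fin n → ℝ)).symm v with hw
  set Aw : EuclideanSpace ℝ (Fin n) := (WithLp.equiv 2 (Fin n → ℝ)).symm (A.mulVec v) with hAw
  have key : ∀ i, b.repr Aw i = hH.eigenvalues i * b.repr w i := by
    intro i
    rw [b.repr_apply_apply, b.repr_apply_apply]
    have h1 : inner (𝕜 := ℝ) (b i) Aw = (⇑(b i)) ⬝ᵥ (A.mulVec v) := (dot_eq_inner _ _).symm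
    have h2 : (⇑(b i)) ⬝ᵥ (A.mulVec v) = (A.mulVec ⇑(b i)) ⬝ᵥ v := by
      rw [dotProduct_mulVec, ← mulVec_transpose, hA.eq]
    have h3 : A.mulVec ⇑(b i) = hH.eigenvalues i • ⇑(b i) := hH.mulVec_eigenvectorBasis i
    have h4 : inner (𝕜 := ℝ) (b i) w = (⇑(b i)) ⬝ᵥ v := (dot_eq_inner _ _).symm
    rw [h1, h2, h3, smul_dotProduct, h4]
    simp
  refine ⟨fun i => b.repr w i, ?_, ?_, ?_⟩
  · rw [dot_eq_inner, inner_expand b]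
  · rw [dot_eq_inner v (A.mulVec v), inner_expand b]
    change ∑ i, (b.repr w).ofLp i * (b.repr Aw).ofLp i = _
    simp_rw [key]
    exact Finset.sum_congr rfl fun i _ => by ring
  · rw [dot_eq_inner (A.mulVec v) (A.mulVec v), inner_expand b]
    change ∑ i, (b.repr Aw).ofLp i * (b.repr Aw).ofLp i = _
    simp_rw [key]
    exact Finset.sum_congr rfl fun i _ => by ring

private lemma hasEigenvalue_of_matrix {n : ℕ} (A : Matrix (Fin n) (Fin n) ℝ)
    (hH : A.IsHermitian) (i : Fin n) :
    Module.End.HasEigenvalue (Matrix.toLin' A) (hH.eigenvalues i) := by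
  apply Module.End.hasEigenvalue_of_hasEigenvector (x := ⇑(hH.eigenvectorBasis i))
  constructor
  · rw [Module.End.mem_eigenspace_iff, Matrix.toLin'_apply]
    exact hH.mulVec_eigenvectorBasis i
  · simpa using hH.eigenvectorBasis.orthonormal.ne_zero i

theorem stmt6 {n : ℕ} (A : Matrix (Fin n) (Fin n) ℝ) (hA : A.IsSymm)
    (hpd : A.PosDef) (lmin lmax : ℝ)
    (hmin : Module.End.HasEigenvalue (Matrix.toLin' A) lmin)
    (hmax : Module.End.HasEigenvalue (Matrix.toLin' A) lmax)
    (hbound : ∀ μ : ℝ, Module.End.HasEigenvalue (Matrix.toLin' A) μ → lmin ≤ μ ∧ μ ≤ lmax)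
    (r : ℕ → Fin n → ℝ)
    (hrec : ∀ k, r (k + 1) = if r k = 0 then 0 else
      r k - (r k ⬝ᵥ A.mulVec (r k) / (A.mulVec (r k) ⬝ᵥ A.mulVec (r k))) • A.mulVec (r k))
    (σ : ℝ) (hσ : σ = (lmax - lmin) / (lmax + lmin)) :
    σ < 1 ∧
    (∀ k, Real.sqrt (r k ⬝ᵥ r k) ≤ σ ^ k * Real.sqrt (r 0 ⬝ᵥ r 0)) ∧
    Tendsto r atTop (nhds 0) := by
  have hH : A.IsHermitian := hpd.1
  have hposdef : ∀ v : Fin n → ℝ, v ≠ 0 → 0 < v ⬝ᵥ A.mulVec v := by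
    intro v hv
    have := hpd.dotProduct_mulVec_pos hv
    simpa using this
  -- lmin > 0
  have hm : 0 < lmin := by
    obtain ⟨v, hv⟩ := hmin.exists_hasEigenvector
    have hv0 : v ≠ 0 := hv.2
    have hAv : A.mulVec v = lmin • v := by
      have := hv.apply_eq_smul
      rwa [Matrix.toLin'_apply] at this
    have h1 : 0 < lmin * (v ⬝ᵥ v) := by
      have h := hposdef v hv0
      rw [hAv] at h
      simpa [smul_eq_mul] using h
    nlinarith [dot_self_pos hv0]
  have hMm : lmin ≤ lmax := (hbound lmin hmin).2
  have hsum : 0 < lmax + lmin := by linarith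
  have hσ0 : 0 ≤ σ := by rw [hσ]; apply div_nonneg <;> linarith
  have hσ1 : σ < 1 := by rw [hσ, div_lt_one hsum]; linarith
  have hσ2 : σ ^ 2 = 1 - 4 * lmin * lmax / ((lmax + lmin) ^ 2) := by
    rw [hσ]; field_simp; ring
  -- one-step contraction
  have step : ∀ k, Real.sqrt (r (k + 1) ⬝ᵥ r (k + 1)) ≤ σ * Real.sqrt (r k ⬝ᵥ r k) := by
    intro k
    by_cases hv0 : r k = 0
    · rw [hrec k, if_pos hv0]
      simp only [zero_dotProduct, Real.sqrt_zero]
      positivity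
    · set v := r k with hvdef
      obtain ⟨c, tc, sc, qc⟩ := spectral_sums A hA hH v
      set t := v ⬝ᵥ v with htdef
      set s := v ⬝ᵥ A.mulVec v with hsdef
      set q := A.mulVec v ⬝ᵥ A.mulVec v with hqdef
      have ht : 0 < t := dot_self_pos hv0
      have hs : 0 < s := hposdef v hv0
      have ha0 : A.mulVec v ≠ 0 := by
        intro h
        rw [hsdef, h] at hs
        simp at hs
      have hq : 0 < q := dot_self_pos ha0
      have hlam : ∀ i, lmin ≤ hH.eigenvalues i ∧ hH.eigenvalues i ≤ lmax :=
        fun i => hbound _ (hasEigenvalue_of_matrix A hH i)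
      -- q ≤ (lmin+lmax) s - lmin lmax t
      have hqb : q ≤ (lmin + lmax) * s - lmin * lmax * t := by
        have : q + lmin * lmax * t ≤ (lmin + lmax) * s := by
          rw [qc, tc, sc, Finset.mul_sum, Finset.mul_sum, ← Finset.sum_add_distrib]
          apply Finset.sum_le_sum
          intro i _
          have h1 := (hlam i).1
          have h2 := (hlam i).2
          nlinarith [mul_nonneg (mul_nonneg (sub_nonneg.2 h1) (sub_nonneg.2 h2))
            (mul_self_nonneg (c i))]
        linarith
      -- Kantorovich
      have key : 4 * lmin * lmax * (t * q) ≤ (lmax + lmin) ^ 2 * (s * s) := by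
        nlinarith [sq_nonneg ((lmax + lmin) * s - 2 * lmin * lmax * t), ht.le, hm.le,
          mul_le_mul_of_nonneg_left hqb (by nlinarith [mul_pos (mul_pos hm (hm.trans_le hMm)) ht] : (0:ℝ) ≤ 4 * lmin * lmax * t)]
      have hexp : r (k + 1) ⬝ᵥ r (k + 1) = t - s * s / q := by
        rw [hrec k, if_neg hv0]
        simp only [sub_dotProduct, dotProduct_sub, smul_dotProduct, dotProduct_smul,
          smul_eq_mul, ← hvdef, ← hsdef, ← hqdef, ← htdef]
        rw [dotProduct_comm (A.mulVec v) v, ← hsdef]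
        field_simp
        ring
      have h6 : (4 * lmin * lmax / ((lmax + lmin) ^ 2)) * t ≤ s * s / q := by
        rw [div_mul_eq_mul_div, div_le_div_iff₀ (by positivity) hq]
        nlinarith [key]
      have hfin : r (k + 1) ⬝ᵥ r (k + 1) ≤ σ ^ 2 * t := by
        rw [hexp]
        calc t - s * s / q ≤ t - (4 * lmin * lmax / ((lmax + lmin) ^ 2)) * t := by linarith
          _ = σ ^ 2 * t := by rw [hσ2]; ring
      calc Real.sqrt (r (k + 1) ⬝ᵥ r (k + 1)) ≤ Real.sqrt (σ ^ 2 * t) :=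
            Real.sqrt_le_sqrt hfin
        _ = σ * Real.sqrt t := by
            rw [Real.sqrt_mul (sq_nonneg σ), Real.sqrt_sq hσ0]
  have bound : ∀ k, Real.sqrt (r k ⬝ᵥ r k) ≤ σ ^ k * Real.sqrt (r 0 ⬝ᵥ r 0) := by
    intro k
    induction k with
    | zero => simp
    | succ k ih =>
        calc Real.sqrt (r (k + 1) ⬝ᵥ r (k + 1)) ≤ σ * Real.sqrt (r k ⬝ᵥ r k) := step k
          _ ≤ σ * (σ ^ k * Real.sqrt (r 0 ⬝ᵥ r 0)) := by
              exact mul_le_mul_of_nonneg_left ih hσ0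
          _ = σ ^ (k + 1) * Real.sqrt (r 0 ⬝ᵥ r 0) := by ring
  refine ⟨hσ1, bound, ?_⟩
  rw [tendsto_pi_nhds]
  intro i
  refine squeeze_zero_norm (a := fun k => σ ^ k * Real.sqrt (r 0 ⬝ᵥ r 0)) ?_ ?_
  · intro k
    have h1 : |r k i| ≤ Real.sqrt (r k ⬝ᵥ r k) := by
      rw [← Real.sqrt_sq_eq_abs]
      apply Real.sqrt_le_sqrt
      calc (r k i) ^ 2 = r k i * r k i := sq (r k i)
        _ ≤ r k ⬝ᵥ r k := Finset.single_le_sum (f := fun j => r k j * r k j)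
            (fun j _ => mul_self_nonneg (r k j)) (Finset.mem_univ i)
    simpa [Real.norm_eq_abs] using h1.trans (bound k)
  · simpa using (tendsto_pow_atTop_nhds_zero_of_lt_one hσ0 hσ1).mul_const
      (Real.sqrt (r 0 ⬝ᵥ r 0))
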